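/- With c_n defined by the recurrence 4(n+4)c_{n+5}+8(n+2)c_{n+4}+(n+3)c_{n+3}+(4n+7)c_{n+2}+(5n+4)c_{n+1}+2n c_n=0 and c_0=0, c_1=1, c_2=2, c_3=-1/8, c_4=-1/2, the number 2^{2n-2}·c_n is an integer for every n ≥ 1; in particular the denominator of each c_n is a power of 2. -/

import Mathlib

/-- Binomial coefficient with integer arguments, zero outside `0 ≤ j ≤ a`. -/
def Bc (a j : ℤ) : ℚ := if 0 ≤ j ∧ j ≤ a then ((a.toNat).choose j.toNat : ℚ) else 0

lemma Bc_neg {a j : ℤ} (h : j < 0) : Bc a j = 0 := by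
  simp [Bc]; intro h'; omega

lemma Bc_gt {a j : ℤ} (h : a < j) : Bc a j = 0 := by
  simp [Bc]; intro h'; omega

lemma Bc_cast (a m : ℕ) : Bc (a : ℤ) (m : ℤ) = (a.choose m : ℚ) := by
  simp only [Bc]
  split_ifs with h
  · simp
  · push_neg at h
    have : a < m := by omega
    rw [Nat.choose_eq_zero_of_lt this]; simp

lemma Bc_pascal (a : ℤ) (j : ℤ) (ha : 0 ≤ a) : Bc (a+1) j = Bc a j + Bc a (j-1) := by
  obtain ⟨A, rfl⟩ := Int.eq_ofNat_of_zero_le ha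
  rcases lt_or_ge j 0 with hj | hj
  · rw [Bc_neg hj, Bc_neg hj, Bc_neg (by omega)]; ring
  · obtain ⟨m, rfl⟩ := Int.eq_ofNat_of_zero_le hj
    cases m with
    | zero =>
      have e1 : ((A:ℤ)+1) = ((A+1 : ℕ) : ℤ) := by push_cast; ring
      rw [show ((0:ℕ):ℤ) = ((0:ℕ):ℤ) from rfl, e1,
        show ((0:ℕ):ℤ) - 1 = -1 by norm_num, Bc_neg (show (-1:ℤ) < 0 by norm_num)]
      rw [show ((0:ℕ):ℤ) = ((0:ℕ):ℤ) from rfl]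
      rw [Bc_cast (A+1) 0, Bc_cast A 0]
      simp
    | succ m =>
      have e1 : ((A:ℤ)+1) = ((A+1 : ℕ) : ℤ) := by push_cast; ring
      have e2 : ((m+1:ℕ):ℤ) - 1 = ((m:ℕ):ℤ) := by push_cast; ring
      rw [e1, e2, Bc_cast, Bc_cast, Bc_cast]
      rw [Nat.choose_succ_succ]
      push_cast; ring

lemma Bc_mul (a j : ℤ) (ha : 0 ≤ a) : j * Bc a j = a * Bc (a-1) (j-1) := by
  obtain ⟨A, rfl⟩ := Int.eq_ofNat_of_zero_le ha
  rcases lt_or_ge j 0 with hj | hj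
  · rw [Bc_neg hj, Bc_neg (by omega)]; ring
  · obtain ⟨m, rfl⟩ := Int.eq_ofNat_of_zero_le hj
    cases m with
    | zero =>
      rw [show ((0:ℕ):ℤ) - 1 = -1 by norm_num, Bc_neg (show (-1:ℤ) < 0 by norm_num)]
      norm_num
    | succ m =>
      cases A with
      | zero =>
        rw [Bc_cast]
        norm_num [Nat.choose_eq_zero_of_lt (show 0 < m+1 by omega)]
      | succ A =>
        have e1 : ((A+1:ℕ):ℤ) - 1 = ((A:ℕ):ℤ) := by push_cast; ring
        have e2 : ((m+1:ℕ):ℤ) - 1 = ((m:ℕ):ℤ) := by push_cast; ring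
        rw [e1, e2, Bc_cast, Bc_cast]
        have := Nat.add_one_mul_choose_eq A m
        have h2 : ((A+1) * A.choose m : ℚ) = ((A+1).choose (m+1) * (m+1) : ℕ) := by
          exact_mod_cast congrArg (Nat.cast : ℕ → ℚ) this
        push_cast at h2 ⊢
        linarith [h2]

lemma Bc_pascal_mul (a j : ℤ) (ha : 0 ≤ a) :
    a * Bc a j = a * Bc (a-1) j + a * Bc (a-1) (j-1) := by
  rcases eq_or_lt_of_le ha with h | h
  · rw [← h]; ring
  · have h1 : (1:ℤ) ≤ a := h
    have := Bc_pascal (a-1) j (by omega)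
    rw [show a - 1 + 1 = a by ring] at this
    rw [this]; ring

lemma Bc_key (a j : ℤ) (ha : 0 ≤ a) :
    4*((j:ℚ)+(a:ℚ)) * Bc a j + ((j:ℚ)+(a:ℚ)-1) * Bc a (j-2)
      + (2*(j:ℚ)+2*(a:ℚ)-3) * Bc a (j-3) + ((j:ℚ)+(a:ℚ)-2) * Bc a (j-4)
    = 4*(a:ℚ)*(Bc a j + Bc (a-1) (j-1))
      + ((a:ℚ)+1)*(Bc (a+2) (j-2) + Bc (a+1) (j-3)) := by
  have p1 : Bc (a+2) (j-2) = Bc (a+1) (j-2) + Bc (a+1) (j-3) := by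
    have := Bc_pascal (a+1) (j-2) (by omega)
    rw [show a+1+1 = a+2 by ring, show j-2-1 = j-3 by ring] at this
    exact this
  have p2 : Bc (a+1) (j-2) = Bc a (j-2) + Bc a (j-3) := by
    have := Bc_pascal a (j-2) ha
    rw [show j-2-1 = j-3 by ring] at this; exact this
  have p3 : Bc (a+1) (j-3) = Bc a (j-3) + Bc a (j-4) := by
    have := Bc_pascal a (j-3) ha
    rw [show j-3-1 = j-4 by ring] at this; exact this
  have d0 := Bc_mul a j ha
  have d2 : ((j:ℚ)-2) * Bc a (j-2) = (a:ℚ) * Bc (a-1) (j-3) := by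
    have := Bc_mul a (j-2) ha
    rw [show j-2-1 = j-3 by ring] at this; push_cast at this ⊢; linarith [this]
  have d3 : ((j:ℚ)-3) * Bc a (j-3) = (a:ℚ) * Bc (a-1) (j-4) := by
    have := Bc_mul a (j-3) ha
    rw [show j-3-1 = j-4 by ring] at this; push_cast at this ⊢; linarith [this]
  have d4 : ((j:ℚ)-4) * Bc a (j-4) = (a:ℚ) * Bc (a-1) (j-5) := by
    have := Bc_mul a (j-4) ha
    rw [show j-4-1 = j-5 by ring] at this; push_cast at this ⊢; linarith [this]
  have q3 : (a:ℚ) * Bc a (j-3) = a * Bc (a-1) (j-3) + a * Bc (a-1) (j-4) := by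
    have := Bc_pascal_mul a (j-3) ha
    rw [show j-3-1 = j-4 by ring] at this; exact this
  have q4 : (a:ℚ) * Bc a (j-4) = a * Bc (a-1) (j-4) + a * Bc (a-1) (j-5) := by
    have := Bc_pascal_mul a (j-4) ha
    rw [show j-4-1 = j-5 by ring] at this; exact this
  push_cast at d0
  linear_combination 4*d0 + d2 + 2*d3 + d4 - q3 - q4 - ((a:ℚ)+1)*p1
    - ((a:ℚ)+1)*p2 - 2*((a:ℚ)+1)*p3

noncomputable def hh (k : ℕ) : ℚ := (-1)^k * ((2*k).choose k : ℚ) / 16^k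

noncomputable def g (m : ℕ) : ℚ :=
  ∑ k ∈ Finset.range (m+1), hh k * Bc (2*(k:ℤ)) ((m:ℤ) - 2*(k:ℤ))

lemma g_eq (m K : ℕ) (h : m < K) :
    g m = ∑ k ∈ Finset.range K, hh k * Bc (2*(k:ℤ)) ((m:ℤ) - 2*(k:ℤ)) := by
  rw [g]
  apply Finset.sum_subset
  · exact Finset.range_subset_range.2 (by omega)
  · intro k hk hk'
    simp only [Finset.mem_range] at hk hk'
    rw [Bc_neg (by push_cast; omega)]
    ring

lemma hh_rec (k : ℕ) : 8*((k:ℚ)+1) * hh (k+1) + (2*(k:ℚ)+1) * hh k = 0 := by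
  have H : ((k+1) * (2*(k+1)).choose (k+1) : ℚ) = 2*(2*(k:ℚ)+1) * ((2*k).choose k) := by
    have := Nat.succ_mul_centralBinom_succ k
    have : ((k+1) * (k+1).centralBinom : ℚ) = ((2 * (2 * k + 1) * k.centralBinom : ℕ) : ℚ) := by
      exact_mod_cast congrArg (Nat.cast : ℕ → ℚ) this
    rw [Nat.centralBinom, Nat.centralBinom] at this
    push_cast at this ⊢
    linarith [this]
  simp only [hh]
  have hne : (16:ℚ)^k ≠ 0 := by positivity
  linear_combination (-((-1:ℚ)^k / (2*16^k))) * H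

noncomputable def Fk (n k : ℕ) : ℚ :=
  8*(k:ℚ)*hh k * (Bc (2*(k:ℤ)) ((n:ℤ)+4-2*(k:ℤ)) + Bc (2*(k:ℤ)-1) ((n:ℤ)+3-2*(k:ℤ)))

noncomputable def Gk (n k : ℕ) : ℚ :=
  (2*(k:ℚ)+1)*hh k * (Bc (2*(k:ℤ)+2) ((n:ℤ)+2-2*(k:ℤ)) + Bc (2*(k:ℤ)+1) ((n:ℤ)+1-2*(k:ℤ)))

lemma Fk0 (n : ℕ) : Fk n 0 = 0 := by simp [Fk]

lemma Gktop (n : ℕ) : Gk n (n+4) = 0 := by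
  rw [Gk, Bc_neg (by push_cast; omega), Bc_neg (by push_cast; omega)]
  ring

lemma FGk (n k : ℕ) : Fk n (k+1) + Gk n k = 0 := by
  rw [Fk, Gk]
  push_cast
  rw [show (2*((k:ℤ)+1)) = 2*(k:ℤ)+2 from by ring]
  rw [show (n:ℤ)+4-(2*(k:ℤ)+2) = (n:ℤ)+2-2*(k:ℤ) from by ring]
  rw [show (2*(k:ℤ)+2)-1 = 2*(k:ℤ)+1 from by ring]
  rw [show (n:ℤ)+3-(2*(k:ℤ)+2) = (n:ℤ)+1-2*(k:ℤ) from by ring]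
  linear_combination (Bc (2*(k:ℤ)+2) ((n:ℤ)+2-2*(k:ℤ)) + Bc (2*(k:ℤ)+1) ((n:ℤ)+1-2*(k:ℤ))) * hh_rec k

lemma keyk (n k : ℕ) :
    4*((n:ℚ)+4) * (hh k * Bc (2*(k:ℤ)) ((n:ℤ)+4 - 2*(k:ℤ)))
      + ((n:ℚ)+3) * (hh k * Bc (2*(k:ℤ)) ((n:ℤ)+2 - 2*(k:ℤ)))
      + (2*(n:ℚ)+5) * (hh k * Bc (2*(k:ℤ)) ((n:ℤ)+1 - 2*(k:ℤ)))
      + ((n:ℚ)+2) * (hh k * Bc (2*(k:ℤ)) ((n:ℤ) - 2*(k:ℤ)))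
    = Fk n k + Gk n k := by
  have K := Bc_key (2*(k:ℤ)) ((n:ℤ)+4-2*(k:ℤ)) (by positivity)
  rw [show (n:ℤ)+4-2*(k:ℤ)-2 = (n:ℤ)+2-2*(k:ℤ) from by ring,
      show (n:ℤ)+4-2*(k:ℤ)-3 = (n:ℤ)+1-2*(k:ℤ) from by ring,
      show (n:ℤ)+4-2*(k:ℤ)-4 = (n:ℤ)-2*(k:ℤ) from by ring,
      show (n:ℤ)+4-2*(k:ℤ)-1 = (n:ℤ)+3-2*(k:ℤ) from by ring] at K
  push_cast at K
  rw [Fk, Gk]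
  push_cast
  linear_combination hh k * K

lemma gRec (n : ℕ) :
    4*((n:ℚ)+4) * g (n+4) + ((n:ℚ)+3) * g (n+2)
      + (2*(n:ℚ)+5) * g (n+1) + ((n:ℚ)+2) * g n = 0 := by
  rw [g_eq (n+4) (n+5) (by omega), g_eq (n+2) (n+5) (by omega),
      g_eq (n+1) (n+5) (by omega), g_eq n (n+5) (by omega),
      Finset.mul_sum, Finset.mul_sum, Finset.mul_sum, Finset.mul_sum,
      ← Finset.sum_add_distrib, ← Finset.sum_add_distrib, ← Finset.sum_add_distrib]
  push_cast
  rw [Finset.sum_congr rfl (fun k _ => keyk n k)]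
  rw [Finset.sum_add_distrib]
  rw [show n+5 = n+4+1 from rfl]
  rw [Finset.sum_range_succ' (Fk n) (n+4), Finset.sum_range_succ (Gk n) (n+4)]
  rw [Fk0, Gktop]
  simp only [add_zero]
  rw [← Finset.sum_add_distrib, Finset.sum_congr rfl (fun k _ => FGk n k)]
  simp

noncomputable def cE : ℕ → ℚ
  | 0 => 0
  | 1 => g 0
  | (n+2) => g (n+1) + 2 * g n

lemma Int_toNat_ofNat (n : ℕ) : (no_index (OfNat.ofNat n : ℤ)).toNat = OfNat.ofNat n := rfl

lemma g0v : g 0 = 1 := by norm_num [g, hh, Bc, Finset.sum_range_succ, Int_toNat_ofNat, Nat.choose]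
lemma g1v : g 1 = 0 := by norm_num [g, hh, Bc, Finset.sum_range_succ, Int_toNat_ofNat, Nat.choose]
lemma g2v : g 2 = -1/8 := by norm_num [g, hh, Bc, Finset.sum_range_succ, Int_toNat_ofNat, Nat.choose]
lemma g3v : g 3 = -1/4 := by norm_num [g, hh, Bc, Finset.sum_range_succ, Int_toNat_ofNat, Nat.choose]
lemma g4v : g 4 = -13/128 := by norm_num [g, hh, Bc, Finset.sum_range_succ, Int_toNat_ofNat, Nat.choose]
lemma g5v : g 5 = 3/32 := by norm_num [g, hh, Bc, Finset.sum_range_succ, Int_toNat_ofNat, Nat.choose]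

lemma cERec (n : ℕ) :
    4*((n:ℚ)+4) * cE (n+5) + 8*((n:ℚ)+2) * cE (n+4) + ((n:ℚ)+3) * cE (n+3)
      + (4*(n:ℚ)+7) * cE (n+2) + (5*(n:ℚ)+4) * cE (n+1) + 2*(n:ℚ) * cE n = 0 := by
  match n with
  | 0 =>
    show 4*((0:ℚ)+4) * (g 4 + 2*g 3) + 8*((0:ℚ)+2) * (g 3 + 2*g 2) + ((0:ℚ)+3) * (g 2 + 2*g 1)
      + (4*(0:ℚ)+7) * (g 1 + 2*g 0) + (5*(0:ℚ)+4) * (g 0) + 2*(0:ℚ) * 0 = 0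
    rw [g0v, g1v, g2v, g3v, g4v]; norm_num
  | 1 =>
    show 4*((1:ℚ)+4) * (g 5 + 2*g 4) + 8*((1:ℚ)+2) * (g 4 + 2*g 3) + ((1:ℚ)+3) * (g 3 + 2*g 2)
      + (4*(1:ℚ)+7) * (g 2 + 2*g 1) + (5*(1:ℚ)+4) * (g 1 + 2*g 0) + 2*(1:ℚ) * (g 0) = 0
    rw [g0v, g1v, g2v, g3v, g4v, g5v]; norm_num
  | (m+2) =>
    have e5 : cE (m+7) = g (m+6) + 2 * g (m+5) := rfl
    have e4 : cE (m+6) = g (m+5) + 2 * g (m+4) := rfl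
    have e3 : cE (m+5) = g (m+4) + 2 * g (m+3) := rfl
    have e2 : cE (m+4) = g (m+3) + 2 * g (m+2) := rfl
    have e1 : cE (m+3) = g (m+2) + 2 * g (m+1) := rfl
    have e0 : cE (m+2) = g (m+1) + 2 * g m := rfl
    rw [show m+2+5 = m+7 from rfl, show m+2+4 = m+6 from rfl, show m+2+3 = m+5 from rfl,
        show m+2+2 = m+4 from rfl, show m+2+1 = m+3 from rfl]
    rw [e5, e4, e3, e2, e1, e0]
    have r2 := gRec (m+2)
    have r1 := gRec (m+1)
    have r0 := gRec m
    rw [show m+2+4 = m+6 from rfl, show m+2+2 = m+4 from rfl, show m+2+1 = m+3 from rfl] at r2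
    rw [show m+1+4 = m+5 from rfl, show m+1+2 = m+3 from rfl, show m+1+1 = m+2 from rfl] at r1
    rw [show m+4 = m+4 from rfl] at r0
    push_cast at r2 r1 r0 ⊢
    linear_combination r2 + 4*r1 + 4*r0

lemma gInt (m : ℕ) : ∃ z : ℤ, (4:ℚ)^m * g m = z := by
  refine ⟨∑ k ∈ Finset.range (m+1),
    ((-1)^k * ((2*k).choose k : ℤ)
      * (if 2*k ≤ m then 4^(m-2*k) * ((2*k).choose (m-2*k) : ℤ) else 0)), ?_⟩
  rw [g, Finset.mul_sum]
  push_cast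
  apply Finset.sum_congr rfl
  intro k _
  by_cases h : 2*k ≤ m
  · rw [if_pos h]
    have e1 : (2*(k:ℤ)) = ((2*k : ℕ) : ℤ) := by push_cast; ring
    have e2 : ((m:ℤ) - 2*(k:ℤ)) = ((m - 2*k : ℕ) : ℤ) := by omega
    rw [e2, e1, Bc_cast, hh]
    have h4 : (4:ℚ)^m = 16^k * 4^(m-2*k) := by
      rw [show (16:ℚ) = 4^2 from by norm_num, ← pow_mul, ← pow_add]
      congr 1
      omega
    have h16 : (16:ℚ)^k ≠ 0 := by positivity
    rw [h4]
    push_cast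
    field_simp
  · rw [if_neg h, Bc_neg (by push_cast; omega)]
    push_cast
    ring

lemma cEInt (n : ℕ) : ∃ z : ℤ, (4:ℚ)^n * cE (n+1) = z := by
  match n with
  | 0 =>
    exact ⟨1, by rw [show cE 1 = g 0 from rfl, g0v]; norm_num⟩
  | (m+1) =>
    obtain ⟨z1, hz1⟩ := gInt (m+1)
    obtain ⟨z2, hz2⟩ := gInt m
    refine ⟨z1 + 8*z2, ?_⟩
    rw [show cE (m+2) = g (m+1) + 2 * g m from rfl]
    push_cast
    rw [← hz1, ← hz2]
    ring

/-- For the sequence `c_n` defined by the stated recurrence and initial data,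
`2^{2n-2}·c_n` is an integer for every `n ≥ 1`. -/
theorem stmt_10 (c : ℕ → ℚ) (h0 : c 0 = 0) (h1 : c 1 = 1) (h2 : c 2 = 2)
    (h3 : c 3 = -1/8) (h4 : c 4 = -1/2)
    (hrec : ∀ n : ℕ,
      4 * ((n : ℚ) + 4) * c (n + 5) + 8 * ((n : ℚ) + 2) * c (n + 4)
        + ((n : ℚ) + 3) * c (n + 3) + (4 * (n : ℚ) + 7) * c (n + 2)
        + (5 * (n : ℚ) + 4) * c (n + 1) + 2 * (n : ℚ) * c n = 0) :
    ∀ n : ℕ, 1 ≤ n → ∃ m : ℤ, (2 : ℚ) ^ (2 * n - 2) * c n = (m : ℚ) := by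
  have hceq : ∀ n, c n = cE n := by
    intro n
    induction n using Nat.strong_induction_on with
    | _ n ih =>
      match n, ih with
      | 0, _ => rw [h0]; rfl
      | 1, _ => rw [h1, show cE 1 = g 0 from rfl, g0v]
      | 2, _ => rw [h2, show cE 2 = g 1 + 2 * g 0 from rfl, g0v, g1v]; norm_num
      | 3, _ => rw [h3, show cE 3 = g 2 + 2 * g 1 from rfl, g1v, g2v]; norm_num
      | 4, _ => rw [h4, show cE 4 = g 3 + 2 * g 2 from rfl, g2v, g3v]; norm_num
      | (k+5), ih =>
        have i0 := ih k (by omega)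
        have i1 := ih (k+1) (by omega)
        have i2 := ih (k+2) (by omega)
        have i3 := ih (k+3) (by omega)
        have i4 := ih (k+4) (by omega)
        have hr := hrec k
        have hcr := cERec k
        have hne : (4*((k:ℚ)+4)) ≠ 0 := by positivity
        apply mul_left_cancel₀ hne
        linear_combination hr - hcr - 8*((k:ℚ)+2)*i4 - ((k:ℚ)+3)*i3
          - (4*(k:ℚ)+7)*i2 - (5*(k:ℚ)+4)*i1 - 2*(k:ℚ)*i0
  intro n hn
  obtain ⟨m', rfl⟩ : ∃ m', n = m' + 1 := ⟨n-1, by omega⟩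
  obtain ⟨z, hz⟩ := cEInt m'
  refine ⟨z, ?_⟩
  rw [hceq, show 2*(m'+1)-2 = 2*m' from by omega,
    show (2:ℚ)^(2*m') = 4^m' from by rw [pow_mul]; norm_num]
  exact hz
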